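/- Let Γ ↷ (X, μ) be a strongly ergodic p.m.p. action of a countable group on a standard probability space and let ε > 0. Then there exist δ > 0 and a finite subset F ⊆ Γ such that for every standard Borel space Y and every Borel map ρ : X → Y satisfying μ({x ∈ X : ρ(gx) = ρ(x)}) ≥ 1 − δ for all g ∈ F, there exists y ∈ Y with μ({x ∈ X : ρ(x) = y}) ≥ 1 − ε. -/

import Mathlib

open MeasureTheory Filter Topology Set
open scoped ENNReal

namespace IoanaPaper

/-- A p.m.p. action is strongly ergodic if every asymptotically invariant sequence of Borel
sets is trivial: `μ(g Aₙ Δ Aₙ) → 0` for all `g` implies `μ(Aₙ)(1 - μ(Aₙ)) → 0`. -/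
def StronglyErgodic {Γ X : Type*} [MeasurableSpace X] (μ : Measure X) (a : Γ → X → X) : Prop :=
  ∀ A : ℕ → Set X, (∀ n, MeasurableSet (A n)) →
    (∀ g : Γ, Tendsto (fun n => μ (symmDiff (a g '' A n) (A n))) atTop (𝓝 0)) →
    Tendsto (fun n => μ (A n) * μ (A n)ᶜ) atTop (𝓝 0)


lemma fin_half : (1:ℝ≥0∞)/2 ≠ ⊤ := (ENNReal.div_lt_top (by norm_num) (by norm_num)).ne
lemma fin_quarter : (1:ℝ≥0∞)/4 ≠ ⊤ := (ENNReal.div_lt_top (by norm_num) (by norm_num)).ne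
lemma fin_three_quarter : (3:ℝ≥0∞)/4 ≠ ⊤ := (ENNReal.div_lt_top (by norm_num) (by norm_num)).ne

lemma half_add_quarter : (1:ℝ≥0∞)/2 + 1/4 = 3/4 := by
  rw [← ENNReal.toReal_eq_toReal_iff' (ENNReal.add_ne_top.2 ⟨fin_half, fin_quarter⟩)
    fin_three_quarter, ENNReal.toReal_add fin_half fin_quarter]
  simp [ENNReal.toReal_div]; norm_num

lemma one_sub_three_quarter : (1:ℝ≥0∞) - 3/4 = 1/4 := by
  rw [← ENNReal.toReal_eq_toReal_iff' (by simp) fin_quarter]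
  rw [ENNReal.toReal_sub_of_le (by
        rw [ENNReal.div_le_iff (by norm_num) (by norm_num)]; norm_num) (by simp)]
  simp [ENNReal.toReal_div]; norm_num

lemma quarter_le_half : (1:ℝ≥0∞)/4 ≤ 1/2 := by
  rw [← ENNReal.toReal_le_toReal fin_quarter fin_half]
  simp [ENNReal.toReal_div]; norm_num

lemma half_le_one : (1:ℝ≥0∞)/2 ≤ 1 := by
  rw [← ENNReal.toReal_le_toReal fin_half (by simp)]
  simp [ENNReal.toReal_div]; norm_num

lemma exists_good_set (ν : Measure ℝ) [IsProbabilityMeasure ν] (ε : ℝ≥0∞)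
    (hε1 : ε ≤ 1/2) (h : ∀ t : ℝ, ν {t} < 1 - ε) :
    ∃ B : Set ℝ, MeasurableSet B ∧ min ε (1/4) ≤ ν B ∧ min ε (1/4) ≤ ν Bᶜ := by
  set S : Set ℝ := {t | 1/2 ≤ ν (Iic t)} with hS
  have hS_up : ∀ s ∈ S, ∀ t, s ≤ t → t ∈ S := fun s hs t hst =>
    le_trans hs (measure_mono (Iic_subset_Iic.mpr hst))
  -- S is nonempty
  have hS_ne : S.Nonempty := by
    have h1 : Tendsto (fun x : ℝ => ν (Iic x)) atTop (𝓝 1) := by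
      simpa using tendsto_measure_Iic_atTop ν
    have h2 : ∀ᶠ x : ℝ in atTop, (1:ℝ≥0∞)/2 < ν (Iic x) :=
      h1.eventually (eventually_gt_nhds (ENNReal.half_lt_self one_ne_zero ENNReal.one_ne_top))
    obtain ⟨t, ht⟩ := h2.exists
    exact ⟨t, ht.le⟩
  -- some Iic has small measure
  have hsmall : ∃ t₁ : ℝ, ν (Iic t₁) < 1/2 := by
    have hinter : (⋂ n : ℕ, Iic (-(n:ℝ))) = ∅ := by
      rw [eq_empty_iff_forall_notMem]
      intro x hx
      obtain ⟨n, hn⟩ := exists_nat_gt (-x)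
      have := mem_iInter.1 hx n
      simp only [mem_Iic] at this
      linarith
    have h2 : Tendsto (fun n : ℕ => ν (Iic (-(n:ℝ)))) atTop (𝓝 0) := by
      have := tendsto_measure_iInter_atTop (μ := ν)
        (s := fun n : ℕ => Iic (-(n:ℝ)))
        (fun n => measurableSet_Iic.nullMeasurableSet)
        (fun i j hij => Iic_subset_Iic.mpr (by
          have : (i:ℝ) ≤ j := by exact_mod_cast hij
          linarith))
        ⟨0, measure_ne_top ν _⟩
      rw [hinter] at this
      simpa [Function.comp_def] using this
    have h3 : ∀ᶠ n : ℕ in atTop, ν (Iic (-(n:ℝ))) < 1/2 :=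
      h2.eventually (eventually_lt_nhds (by
        simp only [ENNReal.div_pos_iff]
        exact ⟨one_ne_zero, by norm_num⟩))
    obtain ⟨n, hn⟩ := h3.exists
    exact ⟨-(n:ℝ), hn⟩
  obtain ⟨t₁, ht₁⟩ := hsmall
  have hbdd : BddBelow S := by
    refine ⟨t₁, fun s hs => ?_⟩
    by_contra hc
    push_neg at hc
    exact absurd (le_trans hs (measure_mono (Iic_subset_Iic.mpr hc.le))) (not_le.mpr ht₁)
  set t := sInf S with htdef
  -- ν (Iic t) ≥ 1/2
  have h1 : (1:ℝ≥0∞)/2 ≤ ν (Iic t) := by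
    have hmem : ∀ n : ℕ, (1:ℝ≥0∞)/2 ≤ ν (Iic (t + 1/((n:ℝ)+1))) := by
      intro n
      have hp : (0:ℝ) < 1/((n:ℝ)+1) := by positivity
      have hlt : sInf S < t + 1/((n:ℝ)+1) := by
        rw [← htdef]; linarith
      obtain ⟨s, hsS, hs⟩ := (csInf_lt_iff hbdd hS_ne).1 hlt
      exact hS_up s hsS _ hs.le
    have hinter : (⋂ n : ℕ, Iic (t + 1/((n:ℝ)+1))) = Iic t := by
      ext x
      simp only [mem_iInter, mem_Iic]
      constructor
      · intro hx
        by_contra hc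
        push_neg at hc
        obtain ⟨n, hn⟩ := exists_nat_one_div_lt (sub_pos.mpr hc)
        have := hx n
        linarith
      · intro hx n
        have hp : (0:ℝ) < 1/((n:ℝ)+1) := by positivity
        linarith
    have htend : Tendsto (fun n : ℕ => ν (Iic (t + 1/((n:ℝ)+1)))) atTop (𝓝 (ν (Iic t))) := by
      have := tendsto_measure_iInter_atTop (μ := ν)
        (s := fun n : ℕ => Iic (t + 1/((n:ℝ)+1)))
        (fun n => measurableSet_Iic.nullMeasurableSet)
        (fun i j hij => Iic_subset_Iic.mpr (by
          have : (i:ℝ) ≤ j := by exact_mod_cast hij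
          have h1 : (1:ℝ)/((j:ℝ)+1) ≤ 1/((i:ℝ)+1) := by
            apply one_div_le_one_div_of_le <;> nlinarith [Nat.cast_nonneg (α := ℝ) i]
          linarith))
        ⟨0, measure_ne_top ν _⟩
      rwa [hinter] at this
    exact ge_of_tendsto' htend hmem
  -- ν (Iio t) ≤ 1/2
  have h2 : ν (Iio t) ≤ 1/2 := by
    have hmem : ∀ n : ℕ, ν (Iic (t - 1/((n:ℝ)+1))) ≤ 1/2 := by
      intro n
      have hp : (0:ℝ) < 1/((n:ℝ)+1) := by positivity
      have hns : t - 1/((n:ℝ)+1) ∉ S := by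
        intro hmem
        have := csInf_le hbdd hmem
        rw [← htdef] at this
        linarith
      exact le_of_not_ge hns
    have hunion : (⋃ n : ℕ, Iic (t - 1/((n:ℝ)+1))) = Iio t := by
      ext x
      simp only [mem_iUnion, mem_Iic, mem_Iio]
      constructor
      · rintro ⟨n, hn⟩
        have hp : (0:ℝ) < 1/((n:ℝ)+1) := by positivity
        linarith
      · intro hx
        obtain ⟨n, hn⟩ := exists_nat_one_div_lt (sub_pos.mpr hx)
        exact ⟨n, by linarith⟩
    have htend : Tendsto (fun n : ℕ => ν (Iic (t - 1/((n:ℝ)+1)))) atTop (𝓝 (ν (Iio t))) := by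
      have := tendsto_measure_iUnion_atTop (μ := ν)
        (s := fun n : ℕ => Iic (t - 1/((n:ℝ)+1)))
        (fun i j hij => Iic_subset_Iic.mpr (by
          have : (i:ℝ) ≤ j := by exact_mod_cast hij
          have h1 : (1:ℝ)/((j:ℝ)+1) ≤ 1/((i:ℝ)+1) := by
            apply one_div_le_one_div_of_le <;> nlinarith [Nat.cast_nonneg (α := ℝ) i]
          linarith))
      rwa [hunion] at this
    exact le_of_tendsto' htend hmem
  have hIic_eq : ν (Iic t) = ν (Iio t) + ν {t} := by
    rw [← Iio_union_right, measure_union (by simp) (measurableSet_singleton t)]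
  rcases le_or_gt (ν {t}) (1/4) with hm | hm
  · refine ⟨Iic t, measurableSet_Iic, ?_, ?_⟩
    · calc min ε (1/4) ≤ 1/4 := min_le_right _ _
        _ ≤ 1/2 := quarter_le_half
        _ ≤ ν (Iic t) := h1
    · have hle : ν (Iic t) ≤ 3/4 := by
        rw [hIic_eq]
        calc ν (Iio t) + ν {t} ≤ 1/2 + 1/4 := add_le_add h2 hm
          _ = 3/4 := half_add_quarter
      have hcompl : ν (Iic t)ᶜ = 1 - ν (Iic t) :=
        prob_compl_eq_one_sub measurableSet_Iic
      rw [hcompl]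
      calc min ε (1/4) ≤ 1/4 := min_le_right _ _
        _ = 1 - 3/4 := one_sub_three_quarter.symm
        _ ≤ 1 - ν (Iic t) := tsub_le_tsub_left hle 1
  · refine ⟨{t}, measurableSet_singleton t, ?_, ?_⟩
    · exact le_trans (min_le_right _ _) hm.le
    · have hcompl : ν ({t} : Set ℝ)ᶜ = 1 - ν {t} :=
        prob_compl_eq_one_sub (measurableSet_singleton t)
      rw [hcompl]
      calc min ε (1/4) ≤ ε := min_le_left _ _
        _ = 1 - (1 - ε) :=
          (ENNReal.sub_sub_cancel ENNReal.one_ne_top (le_trans hε1 half_le_one)).symm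
        _ ≤ 1 - ν {t} := tsub_le_tsub_left (h t).le 1


/-- **Lemma 2.3 ("spectral") of [Ioana]**: let `Γ ↷ (X, μ)` be a strongly ergodic p.m.p.
action of a countable group on a standard probability space and `ε > 0`. Then there are
`δ > 0` and a finite `F ⊆ Γ` such that every Borel map `ρ : X → Y` into a standard Borel
space `Y` with `μ({x | ρ(gx) = ρ(x)}) ≥ 1 - δ` for all `g ∈ F` is `(1 - ε)`-constant:
there is `y ∈ Y` with `μ({x | ρ(x) = y}) ≥ 1 - ε`. -/
theorem stronglyErgodic_almost_invariant_maps_almost_constant.{v}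
    {Γ X : Type*} [Group Γ] [Countable Γ]
    [MeasurableSpace X] [StandardBorelSpace X]
    (μ : Measure X) [IsProbabilityMeasure μ]
    (a : Γ → X → X) (ha_one : ∀ x, a 1 x = x)
    (ha_mul : ∀ g h x, a (g * h) x = a g (a h x))
    (ha_meas : ∀ g, Measurable (a g))
    (ha_pres : ∀ g, MeasurePreserving (a g) μ μ)
    (hse : StronglyErgodic μ a)
    (ε : ℝ≥0∞) (hε : 0 < ε) :
    ∃ (δ : ℝ≥0∞) (F : Finset Γ), 0 < δ ∧
      ∀ (Y : Type v) [MeasurableSpace Y] [StandardBorelSpace Y] (ρ : X → Y),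
        Measurable ρ → (∀ g ∈ F, 1 - δ ≤ μ {x | ρ (a g x) = ρ x}) →
        ∃ y : Y, 1 - ε ≤ μ {x | ρ x = y} := by
  classical
  by_contra hcon
  push_neg at hcon
  -- enumerate the group
  obtain ⟨e, he⟩ := exists_surjective_nat Γ
  set F : ℕ → Finset Γ := fun n => (Finset.range (n+1)).image (fun i => (e i)⁻¹) with hF
  set ε' : ℝ≥0∞ := min ε (1/2) with hε'
  have hε'pos : 0 < ε' := lt_min hε (by norm_num)
  have hε'half : ε' ≤ 1/2 := min_le_right _ _
  have hsub_le : (1:ℝ≥0∞) - ε ≤ 1 - ε' := tsub_le_tsub_left (min_le_left _ _) 1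
  -- extract real-valued counterexample maps
  have key : ∀ n : ℕ, ∃ φ : X → ℝ, Measurable φ ∧
      (∀ g ∈ F n, 1 - ((n:ℝ≥0∞))⁻¹ ≤ μ {x | φ (a g x) = φ x}) ∧
      (∀ t : ℝ, μ.map φ {t} < 1 - ε') := by
    intro n
    obtain ⟨Y, iY, iY2, ρ, hρ, hinvρ, hnc⟩ :=
      hcon ((n:ℝ≥0∞))⁻¹ (F n) (ENNReal.inv_pos.mpr (by simp))
    obtain ⟨f, hf⟩ := exists_measurableEmbedding_real Y
    refine ⟨f ∘ ρ, hf.measurable.comp hρ, ?_, ?_⟩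
    · intro g hg
      refine le_trans (hinvρ g hg) (measure_mono ?_)
      intro x hx
      simp only [mem_setOf_eq, Function.comp_apply] at hx ⊢
      rw [hx]
    · intro t
      rw [Measure.map_apply (hf.measurable.comp hρ) (measurableSet_singleton t)]
      by_cases hy : ∃ y, f y = t
      · obtain ⟨y, rfl⟩ := hy
        have : (f ∘ ρ) ⁻¹' {f y} = {x | ρ x = y} := by
          ext x
          simp [hf.injective.eq_iff]
        rw [this]
        exact lt_of_lt_of_le (hnc y) hsub_le
      · have : (f ∘ ρ) ⁻¹' {t} = ∅ := by
          ext x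
          simp only [mem_preimage, Function.comp_apply, mem_singleton_iff, mem_empty_iff_false,
            iff_false]
          exact fun hc => hy ⟨ρ x, hc⟩
        rw [this, measure_empty, tsub_pos_iff_lt]
        exact lt_of_le_of_lt hε'half (ENNReal.half_lt_self one_ne_zero ENNReal.one_ne_top)
  choose φ hφm hφinv hφatom using key
  -- choose good sets
  have hprob : ∀ n, IsProbabilityMeasure (μ.map (φ n)) :=
    fun n => Measure.isProbabilityMeasure_map (hφm n).aemeasurable
  have key2 : ∀ n : ℕ, ∃ B : Set ℝ, MeasurableSet B ∧
      min ε' (1/4) ≤ (μ.map (φ n)) B ∧ min ε' (1/4) ≤ (μ.map (φ n)) Bᶜ := by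
    intro n
    have := hprob n
    exact exists_good_set (μ.map (φ n)) ε' hε'half (hφatom n)
  choose B hBm hB1 hB2 using key2
  set A : ℕ → Set X := fun n => φ n ⁻¹' B n with hA
  have hAm : ∀ n, MeasurableSet (A n) := fun n => (hφm n) (hBm n)
  -- asymptotic invariance
  have hinv : ∀ g : Γ, Tendsto (fun n => μ (symmDiff (a g '' A n) (A n))) atTop (𝓝 0) := by
    intro g
    obtain ⟨i, rfl⟩ := he g
    refine tendsto_of_tendsto_of_tendsto_of_le_of_le'
      (tendsto_const_nhds) ENNReal.tendsto_inv_nat_nhds_zero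
      (Eventually.of_forall fun n => zero_le) ?_
    filter_upwards [eventually_ge_atTop i] with n hn
    have hmemF : (e i)⁻¹ ∈ F n := by
      rw [hF]
      exact Finset.mem_image.mpr ⟨i, Finset.mem_range.mpr (Nat.lt_succ_of_le hn), rfl⟩
    have himg : a (e i) '' A n = (a (e i)⁻¹) ⁻¹' (A n) := by
      ext x
      constructor
      · rintro ⟨y, hy, rfl⟩
        simpa only [mem_preimage, ← ha_mul, inv_mul_cancel, ha_one] using hy
      · intro hx
        exact ⟨a (e i)⁻¹ x, hx, by rw [← ha_mul, mul_inv_cancel, ha_one]⟩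
    have hmeasset : MeasurableSet {x | φ n (a (e i)⁻¹ x) = φ n x} :=
      MeasureTheory.StronglyMeasurable.measurableSet_eq_fun
        ((hφm n).comp (ha_meas _)).stronglyMeasurable (hφm n).stronglyMeasurable
    have hsub : symmDiff (a (e i) '' A n) (A n) ⊆ {x | φ n (a (e i)⁻¹ x) = φ n x}ᶜ := by
      intro x hx
      rw [himg] at hx
      simp only [mem_compl_iff, mem_setOf_eq]
      intro hEq
      rw [Set.mem_symmDiff] at hx
      have : x ∈ (a (e i)⁻¹) ⁻¹' (A n) ↔ x ∈ A n := by
        simp only [hA, mem_preimage, hEq]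
      tauto
    calc μ (symmDiff (a (e i) '' A n) (A n))
        ≤ μ ({x | φ n (a (e i)⁻¹ x) = φ n x}ᶜ) := measure_mono hsub
      _ = 1 - μ {x | φ n (a (e i)⁻¹ x) = φ n x} := prob_compl_eq_one_sub hmeasset
      _ ≤ 1 - (1 - ((n:ℝ≥0∞))⁻¹) := tsub_le_tsub_left (hφinv n _ hmemF) 1
      _ ≤ ((n:ℝ≥0∞))⁻¹ := tsub_tsub_le
  -- contradiction with strong ergodicity
  have hT := hse A hAm hinv
  set c : ℝ≥0∞ := min ε' (1/4) with hc
  have hcpos : 0 < c := lt_min hε'pos (by norm_num)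
  have hlb : ∀ n, c * c ≤ μ (A n) * μ (A n)ᶜ := by
    intro n
    have h1 : μ (A n) = (μ.map (φ n)) (B n) :=
      (Measure.map_apply (hφm n) (hBm n)).symm
    have h2 : μ (A n)ᶜ = (μ.map (φ n)) (B n)ᶜ := by
      rw [Measure.map_apply (hφm n) (hBm n).compl, hA]
      simp [Set.preimage_compl]
    rw [h1, h2]
    exact mul_le_mul' (hB1 n) (hB2 n)
  have hle : c * c ≤ 0 := ge_of_tendsto' hT hlb
  have : c * c = 0 := le_antisymm hle zero_le
  rcases mul_eq_zero.mp this with h | h <;> exact absurd h hcpos.ne'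

end IoanaPaper
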